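/- Let A be a finite poset, H a Hilbert space, and (H_a)_{a∈A} a decomposable monotone family of closed subspaces of H; let π_a be the orthogonal projection onto H_a and s_a^⊥ the orthogonal projection onto S_a := H_a ∩ ⋂_{b∈A, b<a} H_b^⊥. Then for every a ∈ A, s_a^⊥ = Σ_{b≤a} μ(b, a)·π_b, where μ is the Möbius function of the incidence algebra of A (the inverse of the zeta function, so that this identity is the Möbius inversion of π_a = Σ_{b≤a} s_b^⊥). -/

import Mathlib

open Submodule

variable {𝕜 E : Type*} [RCLike 𝕜] [NormedAddCommGroup E] [InnerProductSpace 𝕜 E]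
  [CompleteSpace E]

/-- The orthogonal projection of `E` onto the topological closure of `K`,
as a continuous linear map `E →L[𝕜] E`. -/
noncomputable def projC (K : Submodule 𝕜 E) : E →L[𝕜] E :=
  haveI : CompleteSpace K.topologicalClosure :=
    K.isClosed_topologicalClosure.completeSpace_coe
  K.topologicalClosure.subtypeL.comp (orthogonalProjection K.topologicalClosure)

/-- A monotone family `(H_a)_{a ∈ A}` of closed subspaces of `E` is decomposable if there is
a family `(S'_a)_{a ∈ A⁺}` of pairwise orthogonal closed subspaces whose total closed span is
`E` and whose partial closed spans over `{b ≤ a}` recover each `H_a`. -/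
def Decomposable {A : Type*} [PartialOrder A] (H : A → Submodule 𝕜 E) : Prop :=
  ∃ S : WithTop A → Submodule 𝕜 E,
    (∀ a, IsClosed ((S a : Submodule 𝕜 E) : Set E)) ∧
    (∀ a b, a ≠ b → ∀ u ∈ S a, ∀ v ∈ S b, (inner 𝕜 u v : 𝕜) = 0) ∧
    (⨆ a, S a).topologicalClosure = ⊤ ∧
    (∀ a : A, (⨆ b ∈ {b : A | b ≤ a}, S (b : WithTop A)).topologicalClosure = H a)

local notation "⟪" x ", " y "⟫" => @inner 𝕜 _ _ x y

lemma orthogonal_topClosure (K : Submodule 𝕜 E) : (K.topologicalClosure)ᗮ = Kᗮ := by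
  haveI : CompleteSpace Kᗮ := K.isClosed_orthogonal.completeSpace_coe
  haveI : HasOrthogonalProjection Kᗮ := HasOrthogonalProjection.ofCompleteSpace _
  rw [← K.orthogonal_orthogonal_eq_closure, Kᗮ.orthogonal_orthogonal]

lemma projC_mem (K : Submodule 𝕜 E) (x : E) : projC K x ∈ K.topologicalClosure := by
  haveI : CompleteSpace K.topologicalClosure :=
    K.isClosed_topologicalClosure.completeSpace_coe
  exact (orthogonalProjection K.topologicalClosure x).2

lemma sub_projC_mem (K : Submodule 𝕜 E) (x : E) : x - projC K x ∈ Kᗮ := by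
  haveI : CompleteSpace K.topologicalClosure :=
    K.isClosed_topologicalClosure.completeSpace_coe
  rw [← orthogonal_topClosure]
  exact sub_starProjection_mem_orthogonal x

lemma projC_eq (K : Submodule 𝕜 E) {x y : E} (hy : y ∈ K.topologicalClosure)
    (h : x - y ∈ Kᗮ) : projC K x = y := by
  haveI : CompleteSpace K.topologicalClosure :=
    K.isClosed_topologicalClosure.completeSpace_coe
  exact eq_starProjection_of_mem_orthogonal hy (by rwa [orthogonal_topClosure])

lemma projC_of_mem (K : Submodule 𝕜 E) {x : E} (hx : x ∈ K.topologicalClosure) :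
    projC K x = x :=
  projC_eq K hx (by simp)

lemma projC_of_mem_orthogonal (K : Submodule 𝕜 E) {x : E} (hx : x ∈ Kᗮ) :
    projC K x = 0 :=
  projC_eq K (zero_mem _) (by simpa)

lemma projC_congr {K L : Submodule 𝕜 E}
    (h : K.topologicalClosure = L.topologicalClosure) : projC K = projC L := by
  ext x
  refine projC_eq K (h ▸ projC_mem L x) ?_
  rw [← orthogonal_topClosure, h, orthogonal_topClosure]
  exact sub_projC_mem L x

lemma projC_biSup_sum {ι : Type*} [DecidableEq ι] (s : Finset ι) (T : ι → Submodule 𝕜 E)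
    (hT : ∀ i, IsClosed ((T i : Submodule 𝕜 E) : Set E))
    (horth : ∀ i ∈ s, ∀ j ∈ s, i ≠ j → ∀ u ∈ T i, ∀ v ∈ T j, ⟪u, v⟫ = 0)
    (x : E) :
    projC (⨆ i ∈ s, T i) x = ∑ i ∈ s, projC (T i) x := by
  have key : ∀ j ∈ s, ∀ v ∈ T j, ⟪v, x - ∑ i ∈ s, projC (T i) x⟫ = 0 := by
    intro j hj v hv
    rw [inner_sub_right, inner_sum]
    have hsum : ∑ i ∈ s, ⟪v, projC (T i) x⟫ = ⟪v, x⟫ := by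
      rw [Finset.sum_eq_single j]
      · have h1 : ⟪v, x - projC (T j) x⟫ = 0 :=
          (Submodule.mem_orthogonal _ _).1 (sub_projC_mem (T j) x) v hv
        rw [inner_sub_right, sub_eq_zero] at h1
        exact h1.symm
      · intro i hi hij
        have hu : projC (T i) x ∈ T i := by
          have := projC_mem (T i) x
          rwa [(hT i).submodule_topologicalClosure_eq] at this
        rw [inner_eq_zero_symm]
        exact horth i hi j hj hij _ hu v hv
      · intro h; exact absurd hj h
    rw [hsum, sub_self]
  refine projC_eq _ ?_ ?_
  · refine Submodule.le_topologicalClosure _ (Submodule.sum_mem _ fun i hi => ?_)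
    have : projC (T i) x ∈ (T i).topologicalClosure := projC_mem (T i) x
    rw [(hT i).submodule_topologicalClosure_eq] at this
    exact Submodule.mem_iSup_of_mem i (Submodule.mem_iSup_of_mem hi this)
  · rw [Submodule.mem_orthogonal]
    intro v hv
    refine Submodule.iSup_induction (motive := fun v => ⟪v, x - ∑ i ∈ s, projC (T i) x⟫ = 0)
      _ hv (fun j v' hv' => ?_) (by simp)
      (fun w z hw hz => by rw [inner_add_left, hw, hz, add_zero])
    by_cases hj : j ∈ s
    · rw [iSup_pos hj] at hv'
      exact key j hj v' hv'
    · rw [iSup_neg hj] at hv'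
      simp only [Submodule.mem_bot] at hv'
      simp [hv']

/-- For a decomposable monotone family of closed subspaces over a finite
poset `A`, the orthogonal projection `s_a^⊥` onto `S_a = H_a ∩ ⋂_{b < a} H_b^⊥` is given by
Möbius inversion of `π_a = Σ_{b ≤ a} s_b^⊥`:  `s_a^⊥ = Σ_{b ≤ a} μ(b, a) • π_b`, where `μ`
is the Möbius function of the incidence algebra of `A`. -/
theorem proj_interaction_eq_moebius_sum
    {A : Type*} [PartialOrder A] [Fintype A] [DecidableEq A]
    [DecidableRel ((· ≤ ·) : A → A → Prop)] [LocallyFiniteOrder A]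
    (H : A → Submodule 𝕜 E)
    (hclosed : ∀ a, IsClosed ((H a : Submodule 𝕜 E) : Set E))
    (hmono : Monotone H)
    (hdec : Decomposable H) :
    ∀ a : A,
      projC (H a ⊓ ⨅ b ∈ {b : A | b < a}, (H b)ᗮ) =
        ∑ b ∈ Finset.univ.filter (fun b => b ≤ a),
          (IncidenceAlgebra.mu ℤ b a) • projC (H b) := by
  classical
  obtain ⟨S, hSclosed, hSorth, -, hSsup⟩ := hdec
  set F : A → Submodule 𝕜 E := fun b => S (b : WithTop A) with hF
  set Sa : A → Submodule 𝕜 E := fun a => H a ⊓ ⨅ b ∈ {b : A | b < a}, (H b)ᗮ with hSa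
  -- rewrite the biSup over the set as a biSup over the finset
  have hsup' : ∀ a : A, (⨆ b ∈ Finset.univ.filter (fun b => b ≤ a), F b).topologicalClosure
      = H a := by
    intro a
    rw [← hSsup a]
    congr 1
    apply iSup_congr
    intro b
    have hmem : (b ∈ Finset.univ.filter (fun b => b ≤ a)) ↔ (b ∈ {b : A | b ≤ a}) := by
      simp only [Finset.mem_filter, Finset.mem_univ, true_and, Set.mem_setOf_eq]
    exact iSup_congr_Prop hmem (fun _ => rfl)
  have horthF : ∀ a : A, ∀ i ∈ Finset.univ.filter (fun b => b ≤ a),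
      ∀ j ∈ Finset.univ.filter (fun b => b ≤ a), i ≠ j →
      ∀ u ∈ F i, ∀ v ∈ F j, ⟪u, v⟫ = 0 := by
    intro a i _ j _ hij u hu v hv
    exact hSorth _ _ (by simpa using hij) u hu v hv
  -- Step 1 : Sa a = F a
  have hstep1 : ∀ a : A, Sa a = F a := by
    intro a
    apply le_antisymm
    · -- Sa a ≤ F a
      intro x hx
      obtain ⟨hxH, hxI⟩ := hx
      have hxI' : ∀ b : A, b < a → x ∈ (H b)ᗮ := fun b hb =>
        (Submodule.mem_iInf _).1 ((Submodule.mem_iInf _).1 hxI b) hb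
      -- x = projC of the big sup applied to x
      have hxmem : x ∈ (⨆ b ∈ Finset.univ.filter (fun b => b ≤ a), F b).topologicalClosure := by
        rw [hsup' a]; exact hxH
      have hx1 : projC (⨆ b ∈ Finset.univ.filter (fun b => b ≤ a), F b) x = x :=
        projC_of_mem _ hxmem
      rw [projC_biSup_sum _ F (fun b => hSclosed _) (horthF a) x] at hx1
      rw [Finset.sum_eq_single a] at hx1
      · have := projC_mem (F a) x
        rw [hx1, (hSclosed _).submodule_topologicalClosure_eq] at this
        exact this
      · intro b hb hba
        have hblt : b < a := lt_of_le_of_ne (by simpa using hb) hba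
        have : x ∈ (F b)ᗮ := by
          have hFb : F b ≤ H b := by
            have h1 : F b ≤ ⨆ c ∈ Finset.univ.filter (fun c => c ≤ b), F c := by
              apply le_iSup₂ (f := fun c (_ : c ∈ Finset.univ.filter (fun c => c ≤ b)) => F c) b
              simp
            exact h1.trans ((Submodule.le_topologicalClosure _).trans (hsup' b).le)
          exact Submodule.orthogonal_le hFb (hxI' b hblt)
        exact projC_of_mem_orthogonal _ this
      · intro h; exact absurd (by simp : a ∈ Finset.univ.filter (fun b => b ≤ a)) h
    · -- F a ≤ Sa a
      intro u hu
      refine ⟨?_, ?_⟩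
      · have h1 : F a ≤ ⨆ c ∈ Finset.univ.filter (fun c => c ≤ a), F c := by
          apply le_iSup₂ (f := fun c (_ : c ∈ Finset.univ.filter (fun c => c ≤ a)) => F c) a
          simp
        exact (h1.trans ((Submodule.le_topologicalClosure _).trans (hsup' a).le)) hu
      · refine (Submodule.mem_iInf _).2 fun c => (Submodule.mem_iInf _).2 fun hc' => ?_
        have hc : c < a := hc'
        rw [← hsup' c, orthogonal_topClosure, ← Submodule.iInf_orthogonal]
        rw [Submodule.mem_iInf]
        intro d
        by_cases hd : d ∈ Finset.univ.filter (fun d => d ≤ c)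
        · have hdc : d ≤ c := by simpa using hd
          have : (⨆ _ : d ∈ Finset.univ.filter (fun d => d ≤ c), F d)ᗮ = (F d)ᗮ := by
            rw [iSup_pos hd]
          rw [this, Submodule.mem_orthogonal]
          intro v hv
          have hne : (d : WithTop A) ≠ (a : WithTop A) := by
            simp only [ne_eq, WithTop.coe_eq_coe]
            exact fun h => absurd (h ▸ hdc) (not_le_of_gt hc)
          exact hSorth _ _ hne v hv u hu
        · have : (⨆ _ : d ∈ Finset.univ.filter (fun d => d ≤ c), F d) = ⊥ := by
            rw [iSup_neg hd]
          rw [this]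
          simp
  -- Step 2 : projC (H b) = ∑_{c ≤ b} projC (Sa c)
  have hstep2 : ∀ b : A, projC (H b)
      = ∑ c ∈ Finset.univ.filter (fun c => c ≤ b), projC (Sa c) := by
    intro b
    ext x
    have h1 : projC (H b) = projC (⨆ c ∈ Finset.univ.filter (fun c => c ≤ b), F c) :=
      projC_congr (by rw [hsup' b, (hclosed b).submodule_topologicalClosure_eq])
    rw [h1]
    rw [ContinuousLinearMap.sum_apply]
    rw [projC_biSup_sum _ F (fun c => hSclosed _) (horthF b) x]
    exact Finset.sum_congr rfl fun c _ => by rw [hstep1 c]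
  -- Step 3 : Möbius inversion
  intro a
  show projC (Sa a) = _
  have : ∑ b ∈ Finset.univ.filter (fun b => b ≤ a), (IncidenceAlgebra.mu ℤ b a) • projC (H b)
      = ∑ b ∈ Finset.univ.filter (fun b => b ≤ a),
          ∑ c ∈ Finset.univ.filter (fun c => c ≤ b),
            (IncidenceAlgebra.mu ℤ b a) • projC (Sa c) := by
    refine Finset.sum_congr rfl fun b _ => ?_
    rw [hstep2 b, Finset.smul_sum]
  rw [this]
  rw [Finset.sum_comm' (t' := Finset.univ.filter (fun c => c ≤ a))
    (s' := fun c => Finset.Icc c a)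
    (by intro b c
        simp only [Finset.mem_filter, Finset.mem_univ, true_and, Finset.mem_Icc]
        constructor
        · rintro ⟨h1, h2⟩; exact ⟨⟨h2, h1⟩, h2.trans h1⟩
        · rintro ⟨⟨h1, h2⟩, h3⟩; exact ⟨h2, h1⟩)]
  have : ∀ c ∈ Finset.univ.filter (fun c => c ≤ a),
      ∑ b ∈ Finset.Icc c a, (IncidenceAlgebra.mu ℤ b a) • projC (Sa c)
        = (if c = a then (1 : ℤ) else 0) • projC (Sa c) := by
    intro c _
    rw [← Finset.sum_smul, IncidenceAlgebra.sum_Icc_mu_left]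
  rw [Finset.sum_congr rfl this]
  rw [Finset.sum_eq_single a]
  · simp
  · intro b _ hba; simp [hba]
  · intro h; exact absurd (by simp : a ∈ Finset.univ.filter (fun b => b ≤ a)) h
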